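/- Fix λ ∈ ℂ and x₀ > 0, and set p₀ = 1/(|λ|² + x₀). Define, for 0 ≤ t < |λ|² + x₀, x(t) = x₀·(1 − t/(|λ|² + x₀))² and p(t) = p₀/(1 − p₀·t). Then on the interval [0, |λ|² + x₀): x(0) = x₀, p(0) = p₀, x(t) > 0, and (x(t), p(t)) solves Hamilton's equations for the Hamiltonian H(x,p) = −x·p², namely dx/dt = −2·x(t)·p(t) and dp/dt = p(t)². -/

import Mathlib

/-- For the Hamiltonian `H(x,p) = −x·p²`, the curves
`x(t) = x₀(1 − t/(|λ|² + x₀))²` and `p(t) = p₀/(1 − p₀t)` with `p₀ = 1/(|λ|² + x₀)`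
solve Hamilton's equations `dx/dt = −2xp`, `dp/dt = p²` on `[0, |λ|² + x₀)`,
with `x(0) = x₀`, `p(0) = p₀` and `x(t) > 0`. -/
theorem circular_characteristics (lam : ℂ) (x₀ : ℝ) (hx₀ : 0 < x₀)
    (p₀ : ℝ) (hp₀ : p₀ = (‖lam‖ ^ 2 + x₀)⁻¹)
    (x p : ℝ → ℝ)
    (hx : ∀ t : ℝ, x t = x₀ * (1 - t / (‖lam‖ ^ 2 + x₀)) ^ 2)
    (hp : ∀ t : ℝ, p t = p₀ / (1 - p₀ * t)) :
    x 0 = x₀ ∧ p 0 = p₀ ∧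
    ∀ t : ℝ, 0 ≤ t → t < ‖lam‖ ^ 2 + x₀ →
      0 < x t ∧ HasDerivAt x (-2 * x t * p t) t ∧ HasDerivAt p ((p t) ^ 2) t := by
  set A : ℝ := ‖lam‖ ^ 2 + x₀ with hA
  clear_value A
  have hA0 : 0 < A := by rw [hA]; positivity
  have hAne : A ≠ 0 := ne_of_gt hA0
  refine ⟨by simp [hx 0], by simp [hp 0], ?_⟩
  intro t ht0 htA
  have h1 : 0 < 1 - t / A := by
    rw [sub_pos, div_lt_one hA0]; exact htA
  have h1ne : (1 : ℝ) - t / A ≠ 0 := ne_of_gt h1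
  have heq : 1 - p₀ * t = 1 - t / A := by rw [hp₀]; ring
  have h1' : (1 : ℝ) - p₀ * t ≠ 0 := by rw [heq]; exact h1ne
  have hAt : A - t ≠ 0 := sub_ne_zero.mpr (ne_of_gt htA)
  refine ⟨by rw [hx]; positivity, ?_, ?_⟩
  · have hdx : HasDerivAt (fun s : ℝ => x₀ * (1 - s / A) ^ 2)
        (x₀ * ((2 : ℕ) * (1 - t / A) ^ (2 - 1) * (-(1 / A)))) t := by
      exact ((((hasDerivAt_id t).div_const A).const_sub 1).pow 2).const_mul x₀
    have hval : -2 * x t * p t = x₀ * ((2 : ℕ) * (1 - t / A) ^ (2 - 1) * (-(1 / A))) := by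
      rw [hx t, hp t, heq, hp₀]
      field_simp [hAt]
      linear_combination (2 * A - 2 * t) * mul_inv_cancel₀ hAne
    rw [hval, funext hx]
    exact hdx
  · have hdp : HasDerivAt (fun s : ℝ => p₀ / (1 - p₀ * s))
        ((0 * (1 - p₀ * t) - p₀ * -(p₀ * 1)) / (1 - p₀ * t) ^ 2) t :=
      (hasDerivAt_const t p₀).div
        (((hasDerivAt_id t).const_mul p₀).const_sub 1) h1'
    have hval : (p t) ^ 2 = (0 * (1 - p₀ * t) - p₀ * -(p₀ * 1)) / (1 - p₀ * t) ^ 2 := by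
      rw [hp t]
      field_simp [hAt]
      ring
    rw [hval, funext hp]
    exact hdp
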